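/- Let k be a field, 𝔤 a finite-dimensional k-vector space with a nondegenerate symmetric bilinear form κ, and 𝔟 ⊆ 𝔤 a subspace whose orthogonal complement 𝔫 := 𝔟^⊥ satisfies 𝔫 ⊆ 𝔟. Set 𝔱 := 𝔟/𝔫. Then the sequence 0 → 𝔟 → 𝔤 ⊕ 𝔱 → 𝔟* → 0 is exact, where the first map sends x ∈ 𝔟 to (x, x mod 𝔫) and the second sends (g, t̄) to the functional κ(g, −)|_𝔟 − ⟨t̄, −⟩, with ⟨·,·⟩ the pairing 𝔱 × 𝔟 → k induced by κ (well-defined since 𝔫 = 𝔟^⊥). In particular (𝔤 ⊕ 𝔱)/𝔟 ≅ 𝔟*. (This is the self-dual exact sequence 0 → 𝔟 → 𝔤 ⊕ 𝔱 → 𝔟^∨ → 0 of B-modules whose associated-bundle version underlies the symplectic structure on the Feigin–Odesskii moduli space.) -/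

import Mathlib

theorem stmt_16 (k : Type*) [Field k] (𝔤 : Type*) [AddCommGroup 𝔤] [Module k 𝔤]
    [FiniteDimensional k 𝔤]
    (κ : 𝔤 →ₗ[k] 𝔤 →ₗ[k] k)
    (hsymm : ∀ x y : 𝔤, κ x y = κ y x)
    (hnondeg : ∀ g : 𝔤, (∀ x : 𝔤, κ g x = 0) → g = 0)
    (𝔟 𝔫 : Submodule k 𝔤)
    (h𝔫 : ∀ g : 𝔤, g ∈ 𝔫 ↔ ∀ x ∈ 𝔟, κ g x = 0)
    (hsub : 𝔫 ≤ 𝔟)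
    -- the pairing 𝔱 × 𝔟 → k induced by κ (well defined since κ(𝔫, 𝔟) = 0)
    (p : (𝔟 ⧸ 𝔫.comap 𝔟.subtype) →ₗ[k] (𝔟 →ₗ[k] k))
    (hp : ∀ x y : 𝔟, p (Submodule.Quotient.mk x) y = κ (x : 𝔤) (y : 𝔤)) :
    Function.Injective
        ((𝔟.subtype).prod (𝔫.comap 𝔟.subtype).mkQ) ∧
    Function.Surjective ((κ.compl₂ 𝔟.subtype).coprod (-p)) ∧
    LinearMap.range ((𝔟.subtype).prod (𝔫.comap 𝔟.subtype).mkQ) =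
      LinearMap.ker ((κ.compl₂ 𝔟.subtype).coprod (-p)) := by
  have hnd : LinearMap.BilinForm.Nondegenerate κ :=
    ⟨hnondeg, fun y hy => hnondeg y (fun x => by rw [hsymm]; exact hy x)⟩
  refine ⟨?_, ?_, ?_⟩
  · intro x y h
    have h1 : (x : 𝔤) = (y : 𝔤) := congrArg Prod.fst h
    exact Subtype.ext h1
  · intro f
    obtain ⟨F, hF⟩ := LinearMap.exists_extend f
    obtain ⟨g, hg⟩ := (LinearMap.BilinForm.toDual κ hnd).surjective F
    refine ⟨(g, 0), ?_⟩
    ext y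
    have : κ g (y : 𝔤) = F (y : 𝔤) := by
      rw [← hg]; rfl
    have hFy : F (y : 𝔤) = f y := by rw [← hF]; rfl
    simp [LinearMap.coprod_apply, this, hFy]
  · apply le_antisymm
    · rintro ⟨g, t⟩ ⟨x, hx⟩
      obtain ⟨h1, h2⟩ := Prod.mk.injEq .. ▸ hx
      simp only [LinearMap.mem_ker, LinearMap.coprod_apply]
      ext y
      subst h1 h2
      simp [hp x y]
    · rintro ⟨g, t⟩ ht
      simp only [LinearMap.mem_ker, LinearMap.coprod_apply] at ht
      obtain ⟨x, rfl⟩ := Submodule.mkQ_surjective _ t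
      have key : ∀ y : 𝔟, κ g (y : 𝔤) = κ (x : 𝔤) (y : 𝔤) := by
        intro y
        have h' : κ g (y : 𝔤) + -(p (Submodule.Quotient.mk x) y) = 0 := by
          simpa using congrArg (fun f => f y) ht
        rw [hp x y] at h'
        exact sub_eq_zero.mp (by rw [sub_eq_add_neg]; exact h')
      have hgx : g - (x : 𝔤) ∈ 𝔫 := by
        rw [h𝔫]
        intro z hz
        have := key ⟨z, hz⟩
        simp [LinearMap.sub_apply, this]
      have hg𝔟 : g ∈ 𝔟 := by
        have := 𝔟.add_mem (hsub hgx) x.2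
        simpa using this
      refine ⟨⟨g, hg𝔟⟩, ?_⟩
      simp only [LinearMap.prod_apply, Function.prod, Submodule.subtype_apply]
      refine Prod.ext rfl ?_
      rw [Submodule.mkQ_apply, Submodule.mkQ_apply, Submodule.Quotient.eq]
      exact Submodule.mem_comap.mpr (by simpa using hgx)
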